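/- arXiv:1209.3492 — 3 statements merged into one kernel-verified Lean document; each statement's English description precedes it below -/
import Mathlib

section
/- For every orthogonal transformation T : ℝⁿ → ℝⁿ and every ε > 0, there exists an orthogonal linear map A : ℝⁿ → ℝⁿ mapping ℚⁿ into ℚⁿ such that the operator norm ‖T − A‖ is less than ε. -/
open scoped RealInnerProductSpace

abbrev Eu (n : ℕ) := EuclideanSpace ℝ (Fin n)

def IsRatVec {n : ℕ} (x : Eu n) : Prop := ∀ i, ∃ r : ℚ, x i = (r : ℝ)

lemma isRatVec_inner {n : ℕ} {x y : Eu n} (hx : IsRatVec x) (hy : IsRatVec y) :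
    ∃ q : ℚ, ⟪x, y⟫ = (q : ℝ) := by
  choose p hp using hx
  choose q hq using hy
  refine ⟨∑ i, p i * q i, ?_⟩
  simp only [PiLp.inner_apply, RCLike.inner_apply, conj_trivial]
  push_cast
  exact Finset.sum_congr rfl fun i _ => by rw [hp i, hq i, mul_comm]

lemma refl_formula {n : ℕ} (v x : Eu n) :
    (Submodule.reflection (ℝ ∙ v)ᗮ) x = x - (2 * (⟪v, x⟫ / ‖v‖ ^ 2)) • v := by
  rw [Submodule.reflection_apply, Submodule.starProjection_orthogonal_val, Submodule.starProjection_singleton]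
  simp only [RCLike.ofReal_real_eq_id, id_eq]
  module

lemma isRatVec_reflection {n : ℕ} {w : Eu n} (hw : IsRatVec w) {x : Eu n} (hx : IsRatVec x) :
    IsRatVec ((Submodule.reflection (ℝ ∙ w)ᗮ) x) := by
  obtain ⟨a, ha⟩ := isRatVec_inner hw hx
  obtain ⟨b, hb⟩ := isRatVec_inner hw hw
  intro i
  obtain ⟨xi, hxi⟩ := hx i
  obtain ⟨wi, hwi⟩ := hw i
  refine ⟨xi - 2 * (a / b) * wi, ?_⟩
  have hnorm : (‖w‖ : ℝ) ^ 2 = (b : ℝ) := by rw [← real_inner_self_eq_norm_sq, hb]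
  rw [refl_formula]
  simp only [PiLp.sub_apply, PiLp.smul_apply, smul_eq_mul]
  rw [ha, hnorm, hxi, hwi]
  push_cast
  ring

lemma exists_rat_close {n : ℕ} (u : Eu n) {δ : ℝ} (hδ : 0 < δ) :
    ∃ w : Eu n, IsRatVec w ∧ ‖w - u‖ < δ := by
  have hs : (0:ℝ) < Real.sqrt n + 1 := by positivity
  set δ' := δ / (Real.sqrt n + 1) with hδ'def
  have hδ' : 0 < δ' := by positivity
  choose q hq using fun i => exists_rat_near (u i) hδ'
  set w : Eu n := WithLp.toLp 2 (fun i => (q i : ℝ)) with hwdef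
  refine ⟨w, fun i => ⟨q i, rfl⟩, ?_⟩
  have hbound : ‖w - u‖ ≤ Real.sqrt n * δ' := by
    have h1 : ‖w - u‖ ≤ Real.sqrt (∑ _i : Fin n, δ' ^ 2) := by
      rw [EuclideanSpace.norm_eq]
      apply Real.sqrt_le_sqrt
      apply Finset.sum_le_sum
      intro i _
      have h2 : ‖(w - u) i‖ ≤ δ' := by
        simp only [hwdef, PiLp.sub_apply, PiLp.toLp_apply]
        rw [Real.norm_eq_abs, abs_sub_comm]
        exact (hq i).le
      exact sq_le_sq' (by linarith [norm_nonneg ((w - u) i)]) h2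
    refine h1.trans ?_
    rw [Finset.sum_const, Finset.card_univ, Fintype.card_fin, nsmul_eq_mul,
      Real.sqrt_mul (by positivity), Real.sqrt_sq hδ'.le]
  refine hbound.trans_lt ?_
  have : Real.sqrt n * δ' < (Real.sqrt n + 1) * δ' := by nlinarith [Real.sqrt_nonneg (n:ℝ)]
  refine this.trans_le ?_
  rw [hδ'def, mul_div_cancel₀ _ hs.ne']

lemma refl_diff_bound {n : ℕ} {u w : Eu n} (hu : ‖u‖ = 1) (hw : ‖w‖ = 1) (x : Eu n) :
    ‖(Submodule.reflection (ℝ ∙ u)ᗮ) x - (Submodule.reflection (ℝ ∙ w)ᗮ) x‖ ≤ 4 * ‖u - w‖ * ‖x‖ := by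
  rw [refl_formula, refl_formula, hu, hw]
  have key : (x - (2 * (⟪u, x⟫ / (1:ℝ) ^ 2)) • u) - (x - (2 * (⟪w, x⟫ / (1:ℝ) ^ 2)) • w)
      = (2 * (⟪w, x⟫ - ⟪u, x⟫)) • w + (2 * ⟪u, x⟫) • (w - u) := by
    simp only [one_pow, div_one]
    module
  rw [key]
  have h1 : ‖(2 * (⟪w, x⟫ - ⟪u, x⟫)) • w‖ ≤ 2 * ‖u - w‖ * ‖x‖ := by
    rw [norm_smul, hw, mul_one, Real.norm_eq_abs, abs_mul, abs_two]
    have : ⟪w, x⟫ - ⟪u, x⟫ = ⟪w - u, x⟫ := (inner_sub_left _ _ _).symm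
    rw [this]
    have h3 := abs_real_inner_le_norm (w - u) x
    rw [norm_sub_rev] at h3
    linarith
  have h2 : ‖(2 * ⟪u, x⟫) • (w - u)‖ ≤ 2 * ‖u - w‖ * ‖x‖ := by
    rw [norm_smul, Real.norm_eq_abs, abs_mul, abs_two]
    have h3 := abs_real_inner_le_norm u x
    rw [hu, one_mul] at h3
    rw [norm_sub_rev w u]
    nlinarith [abs_nonneg ⟪u, x⟫, norm_nonneg (u - w), norm_nonneg x]
  calc ‖(2 * (⟪w, x⟫ - ⟪u, x⟫)) • w + (2 * ⟪u, x⟫) • (w - u)‖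
      ≤ ‖(2 * (⟪w, x⟫ - ⟪u, x⟫)) • w‖ + ‖(2 * ⟪u, x⟫) • (w - u)‖ := norm_add_le _ _
    _ ≤ 4 * ‖u - w‖ * ‖x‖ := by linarith

lemma norm_map_of_inner {n : ℕ} {A : Eu n ≃ₗ[ℝ] Eu n}
    (hA : ∀ x y : Eu n, ⟪A x, A y⟫ = ⟪x, y⟫) (z : Eu n) : ‖A z‖ = ‖z‖ := by
  have h : ‖A z‖ ^ 2 = ‖z‖ ^ 2 := by
    rw [← real_inner_self_eq_norm_sq, ← real_inner_self_eq_norm_sq, hA]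
  nlinarith [norm_nonneg (A z), norm_nonneg z]

lemma refl_smul {n : ℕ} {c : ℝ} (hc : c ≠ 0) (v x : Eu n) :
    (Submodule.reflection (ℝ ∙ (c • v))ᗮ) x = (Submodule.reflection (ℝ ∙ v)ᗮ) x := by
  rcases eq_or_ne v 0 with rfl | hv
  · rw [smul_zero]
  rw [refl_formula, refl_formula, norm_smul, real_inner_smul_left, smul_smul, mul_pow,
    Real.norm_eq_abs, sq_abs]
  congr 2
  have hv' : ‖v‖ ≠ 0 := norm_ne_zero_iff.mpr hv
  field_simp

lemma gen_approx {n : ℕ} (v : Eu n) {ε : ℝ} (hε : 0 < ε) :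
    ∃ A : Eu n ≃ₗ[ℝ] Eu n, (∀ x y : Eu n, ⟪A x, A y⟫ = ⟪x, y⟫) ∧
      (∀ x : Eu n, IsRatVec x → IsRatVec (A x)) ∧
      ∀ x : Eu n, ‖(Submodule.reflection (ℝ ∙ v)ᗮ) x - A x‖ ≤ ε * ‖x‖ := by
  by_cases hv : v = 0
  · refine ⟨LinearEquiv.refl ℝ (Eu n), fun x y => rfl, fun x hx => hx, fun x => ?_⟩
    have : (Submodule.reflection (ℝ ∙ v)ᗮ) x = x := by
      rw [refl_formula, hv]
      simp
    rw [this]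
    simp only [LinearEquiv.refl_apply, sub_self, norm_zero]
    positivity
  · set u : Eu n := ‖v‖⁻¹ • v with hudef
    have hu : ‖u‖ = 1 := norm_smul_inv_norm hv
    set δ := min (ε / 8) (1 / 2) with hδdef
    have hδ : 0 < δ := by
      apply lt_min (by linarith) (by norm_num)
    obtain ⟨w, hwrat, hwu⟩ := exists_rat_close u hδ
    have hwnorm : (1:ℝ) / 2 ≤ ‖w‖ := by
      have h1 : |‖w‖ - ‖u‖| ≤ ‖w - u‖ := abs_norm_sub_norm_le w u
      rw [hu] at h1
      have h2 : δ ≤ 1 / 2 := min_le_right _ _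
      have h4 := neg_abs_le (‖w‖ - 1)
      linarith
    have hw0 : w ≠ 0 := by
      intro h
      rw [h, norm_zero] at hwnorm
      norm_num at hwnorm
    set wh : Eu n := ‖w‖⁻¹ • w with hwhdef
    have hwh : ‖wh‖ = 1 := norm_smul_inv_norm hw0
    have hdist : ‖u - wh‖ ≤ 2 * δ := by
      have h1 : ‖u - wh‖ ≤ ‖u - w‖ + ‖w - wh‖ := norm_sub_le_norm_sub_add_norm_sub u w wh
      have h2 : ‖w - wh‖ = |‖w‖ - 1| := by
        have h5 : w - wh = (1 - ‖w‖⁻¹) • w := by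
          rw [hwhdef, sub_smul, one_smul]
        rw [h5, norm_smul, Real.norm_eq_abs]
        have hwpos : (0:ℝ) < ‖w‖ := by linarith
        rw [← abs_norm w, ← abs_mul]
        congr 1
        field_simp
        rw [abs_norm]
        ring
      have h3 : |‖w‖ - 1| ≤ ‖w - u‖ := by
        rw [← hu]
        exact abs_norm_sub_norm_le w u
      have h4 : ‖u - w‖ = ‖w - u‖ := norm_sub_rev u w
      rw [h2] at h1
      linarith
    refine ⟨(Submodule.reflection (ℝ ∙ w)ᗮ).toLinearEquiv, ?_, ?_, ?_⟩
    · intro x y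
      exact (Submodule.reflection (ℝ ∙ w)ᗮ).inner_map_map x y
    · intro x hx
      exact isRatVec_reflection hwrat hx
    · intro x
      have e1 : (Submodule.reflection (ℝ ∙ v)ᗮ) x = (Submodule.reflection (ℝ ∙ u)ᗮ) x :=
        (refl_smul (inv_ne_zero (norm_ne_zero_iff.mpr hv)) v x).symm
      have e2 : (Submodule.reflection (ℝ ∙ w)ᗮ).toLinearEquiv x = (Submodule.reflection (ℝ ∙ wh)ᗮ) x := by
        show (Submodule.reflection (ℝ ∙ w)ᗮ) x = _
        exact (refl_smul (inv_ne_zero (norm_ne_zero_iff.mpr hw0)) w x).symm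
      rw [e1, e2]
      refine (refl_diff_bound hu hwh x).trans ?_
      have hδε : δ ≤ ε / 8 := min_le_left _ _
      have hx0 : (0:ℝ) ≤ ‖x‖ := norm_nonneg x
      nlinarith [hdist, norm_nonneg (u - wh)]

lemma list_approx {n : ℕ} (l : List (Eu n)) {ε : ℝ} (hε : 0 < ε) :
    ∃ A : Eu n ≃ₗ[ℝ] Eu n, (∀ x y : Eu n, ⟪A x, A y⟫ = ⟪x, y⟫) ∧
      (∀ x : Eu n, IsRatVec x → IsRatVec (A x)) ∧
      ∀ x : Eu n, ‖((l.map fun v => Submodule.reflection (ℝ ∙ v)ᗮ).prod) x - A x‖ ≤ ε * ‖x‖ := by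
  induction l generalizing ε with
  | nil =>
    refine ⟨LinearEquiv.refl ℝ (Eu n), fun x y => rfl, fun x hx => hx, fun x => ?_⟩
    simp only [List.map_nil, List.prod_nil, LinearEquiv.refl_apply]
    have : ((1 : Eu n ≃ₗᵢ[ℝ] Eu n)) x = x := rfl
    rw [this, sub_self, norm_zero]
    positivity
  | cons v l ih =>
    obtain ⟨A₀, hA₀i, hA₀r, hA₀⟩ := ih (half_pos hε)
    obtain ⟨A₁, hA₁i, hA₁r, hA₁⟩ := gen_approx v (half_pos hε)
    refine ⟨A₀.trans A₁, ?_, ?_, ?_⟩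
    · intro x y
      simp only [LinearEquiv.trans_apply]
      rw [hA₁i, hA₀i]
    · intro x hx
      exact hA₁r _ (hA₀r _ hx)
    · intro x
      set P := ((l.map fun v => Submodule.reflection (ℝ ∙ v)ᗮ).prod) with hP
      have hprod : ((((v :: l).map fun v => Submodule.reflection (ℝ ∙ v)ᗮ)).prod) x
          = (Submodule.reflection (ℝ ∙ v)ᗮ) (P x) := by
        rw [List.map_cons, List.prod_cons]
        rfl
      rw [hprod]
      have htri : ‖(Submodule.reflection (ℝ ∙ v)ᗮ) (P x) - (A₀.trans A₁) x‖
          ≤ ‖(Submodule.reflection (ℝ ∙ v)ᗮ) (P x) - A₁ (P x)‖ + ‖A₁ (P x) - A₁ (A₀ x)‖ := by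
        have := norm_sub_le_norm_sub_add_norm_sub ((Submodule.reflection (ℝ ∙ v)ᗮ) (P x)) (A₁ (P x))
          ((A₀.trans A₁) x)
        simpa using this
      have h1 : ‖(Submodule.reflection (ℝ ∙ v)ᗮ) (P x) - A₁ (P x)‖ ≤ ε / 2 * ‖x‖ := by
        refine (hA₁ (P x)).trans ?_
        rw [P.norm_map]
      have h2 : ‖A₁ (P x) - A₁ (A₀ x)‖ ≤ ε / 2 * ‖x‖ := by
        rw [← map_sub, norm_map_of_inner hA₁i]
        exact hA₀ x
      calc ‖(Submodule.reflection (ℝ ∙ v)ᗮ) (P x) - (A₀.trans A₁) x‖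
          ≤ ε / 2 * ‖x‖ + ε / 2 * ‖x‖ := by linarith
        _ = ε * ‖x‖ := by ring

/-- Every orthogonal transformation of ℝⁿ can be approximated arbitrarily well in
operator norm by an orthogonal transformation mapping ℚⁿ into ℚⁿ. -/
theorem orthogonal_approx_rational (n : ℕ)
    (T : EuclideanSpace ℝ (Fin n) ≃ₗ[ℝ] EuclideanSpace ℝ (Fin n))
    (hT : ∀ x y : EuclideanSpace ℝ (Fin n), ⟪T x, T y⟫ = ⟪x, y⟫)
    (ε : ℝ) (hε : 0 < ε) :
    ∃ A : EuclideanSpace ℝ (Fin n) ≃ₗ[ℝ] EuclideanSpace ℝ (Fin n),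
      (∀ x y : EuclideanSpace ℝ (Fin n), ⟪A x, A y⟫ = ⟪x, y⟫) ∧
      (∀ x : EuclideanSpace ℝ (Fin n), (∀ i, ∃ r : ℚ, x i = (r : ℝ)) →
        (∀ i, ∃ r : ℚ, A x i = (r : ℝ))) ∧
      ‖T.toLinearMap.toContinuousLinearMap - A.toLinearMap.toContinuousLinearMap‖ < ε := by
  set φ : Eu n ≃ₗᵢ[ℝ] Eu n := T.isometryOfInner hT with hφ
  obtain ⟨l, -, hl⟩ := φ.reflections_generate_dim
  obtain ⟨A, hAi, hAr, hA⟩ := list_approx l (half_pos hε)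
  refine ⟨A, hAi, hAr, ?_⟩
  have key : ∀ x : Eu n,
      ‖(T.toLinearMap.toContinuousLinearMap - A.toLinearMap.toContinuousLinearMap) x‖
        ≤ ε / 2 * ‖x‖ := by
    intro x
    have hTx : T x = ((l.map fun v => Submodule.reflection (ℝ ∙ v)ᗮ).prod) x := by
      have : φ x = T x := rfl
      rw [← this, hl]
    simp only [ContinuousLinearMap.sub_apply, LinearMap.coe_toContinuousLinearMap',
      LinearEquiv.coe_coe]
    rw [hTx]
    exact hA x
  have hop : ‖T.toLinearMap.toContinuousLinearMap - A.toLinearMap.toContinuousLinearMap‖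
      ≤ ε / 2 := ContinuousLinearMap.opNorm_le_bound _ (by linarith) key
  linarith
end

section
/- Every Lorentz transformation of ℝᵈ (linear map preserving the quadratic form x₁² − x₂² − ··· − x_d²) can be approximated arbitrarily well in operator norm by a Lorentz transformation that maps ℚᵈ into ℚᵈ: for every Lorentz transformation L and every ε > 0 there exists a Lorentz transformation L* with L*(ℚᵈ) ⊆ ℚᵈ and ‖L − L*‖ < ε. -/
/-- The Minkowski quadratic form x₁² − x₂² − ⋯ − x_d². -/
noncomputable def mink (d : ℕ) (x : EuclideanSpace ℝ (Fin (d + 2))) : ℝ :=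
  x 0 ^ 2 - ∑ i ∈ Finset.univ.filter (fun i => i ≠ (0 : Fin (d + 2))), x i ^ 2


namespace LorentzAux

variable {d : ℕ}

local notation "E" => EuclideanSpace ℝ (Fin (d + 2))

/-- The Minkowski bilinear form. -/
noncomputable def Bf (x y : EuclideanSpace ℝ (Fin (d+2))) : ℝ :=
  x 0 * y 0 - ∑ i ∈ Finset.univ.filter (fun i => i ≠ (0 : Fin (d + 2))), x i * y i

lemma mink_eq_Bf (x : E) : mink d x = Bf x x := by
  simp [mink, Bf, sq]

lemma Bf_symm (x y : E) : Bf x y = Bf y x := by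
  simp only [Bf, mul_comm]

lemma Bf_add_left (x y z : E) : Bf (x + y) z = Bf x z + Bf y z := by
  simp only [Bf, PiLp.add_apply, add_mul, Finset.sum_add_distrib]; ring

lemma Bf_sub_left (x y z : E) : Bf (x - y) z = Bf x z - Bf y z := by
  simp only [Bf, PiLp.sub_apply, sub_mul, Finset.sum_sub_distrib]; ring

lemma Bf_smul_left (c : ℝ) (x z : E) : Bf (c • x) z = c * Bf x z := by
  simp only [Bf, PiLp.smul_apply, smul_eq_mul, mul_assoc, ← Finset.mul_sum]; ring

lemma Bf_add_right (x y z : E) : Bf x (y + z) = Bf x y + Bf x z := by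
  rw [Bf_symm, Bf_add_left, Bf_symm y x, Bf_symm z x]

lemma Bf_sub_right (x y z : E) : Bf x (y - z) = Bf x y - Bf x z := by
  rw [Bf_symm, Bf_sub_left, Bf_symm y x, Bf_symm z x]

lemma Bf_smul_right (c : ℝ) (x z : E) : Bf x (c • z) = c * Bf x z := by
  rw [Bf_symm, Bf_smul_left, Bf_symm]

lemma Bf_neg_left (x z : E) : Bf (-x) z = -Bf x z := by
  rw [show -x = (-1 : ℝ) • x by simp, Bf_smul_left]; ring

/-- Polarization. -/
lemma Bf_polar (x y : E) : Bf x y = (mink d (x + y) - mink d x - mink d y) / 2 := by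
  simp only [mink_eq_Bf, Bf_add_left, Bf_add_right, Bf_symm y x]; ring

lemma Bf_of_mink (L : E ≃ₗ[ℝ] E) (hL : ∀ x, mink d (L x) = mink d x) :
    ∀ x y, Bf (L x) (L y) = Bf x y := by
  intro x y
  rw [Bf_polar, Bf_polar, ← map_add, hL, hL, hL]

noncomputable def ev (i : Fin (d+2)) : EuclideanSpace ℝ (Fin (d+2)) := EuclideanSpace.single i 1

lemma Bf_single (x : E) (i : Fin (d+2)) :
    Bf x (ev i) = if i = 0 then x 0 else -(x i) := by
  simp only [Bf, ev, EuclideanSpace.single_apply, mul_ite, mul_one, mul_zero]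
  rw [Finset.sum_ite_eq' (Finset.univ.filter (fun j => j ≠ (0:Fin (d+2)))) i (fun j => x j)]
  by_cases h : i = 0 <;> simp [h, eq_comm]

lemma Bf_single_self (i : Fin (d+2)) : Bf (ev i) (ev i) ≠ 0 := by
  rw [Bf_single]
  by_cases h : i = 0 <;> simp [h, ev, EuclideanSpace.single_apply]

lemma Bf_single_ne (i k : Fin (d+2)) (h : i ≠ k) : Bf (ev i) (ev k) = 0 := by
  rw [Bf_single]
  by_cases h0 : k = 0
  · subst h0; simp [ev, EuclideanSpace.single_apply, Ne.symm h]
  · simp [h0, ev, EuclideanSpace.single_apply, Ne.symm h]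

lemma eq_of_Bf_single (x y : EuclideanSpace ℝ (Fin (d+2)))
    (h : ∀ i, Bf x (ev i) = Bf y (ev i)) : x = y := by
  ext i
  have := h i
  rw [Bf_single, Bf_single] at this
  by_cases h0 : i = 0
  · subst h0; simpa using this
  · simp only [h0, if_false, neg_inj] at this; exact this

/-- Reflection in the hyperplane orthogonal to `v`, as a linear map. -/
noncomputable def reflL (v : EuclideanSpace ℝ (Fin (d+2))) :
    EuclideanSpace ℝ (Fin (d+2)) →ₗ[ℝ] EuclideanSpace ℝ (Fin (d+2)) where
  toFun x := x - (2 * Bf x v / Bf v v) • v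
  map_add' x y := by
    rw [Bf_add_left]
    rw [show (2 * (Bf x v + Bf y v) / Bf v v) = 2 * Bf x v / Bf v v + 2 * Bf y v / Bf v v by ring]
    rw [add_smul]; abel
  map_smul' c x := by
    rw [Bf_smul_left]
    rw [show (2 * (c * Bf x v) / Bf v v) = c * (2 * Bf x v / Bf v v) by ring]
    rw [mul_smul]
    simp only [RingHom.id_apply, smul_sub]

lemma reflL_apply (v x : E) : reflL v x = x - (2 * Bf x v / Bf v v) • v := rfl

lemma Bf_reflL (v : E) (hv : Bf v v ≠ 0) (x y : E) :
    Bf (reflL v x) (reflL v y) = Bf x y := by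
  simp only [reflL_apply, Bf_sub_left, Bf_sub_right, Bf_smul_left, Bf_smul_right,
    Bf_symm v x, Bf_symm v y]
  field_simp
  ring

lemma reflL_invol (v : E) (hv : Bf v v ≠ 0) (x : E) : reflL v (reflL v x) = x := by
  simp only [reflL_apply, Bf_sub_left, Bf_smul_left]
  rw [show 2 * (Bf x v - 2 * Bf x v / Bf v v * Bf v v) / Bf v v
      = -(2 * Bf x v / Bf v v) by field_simp; ring]
  rw [neg_smul]; abel

lemma reflL_of_orth (v x : E) (h : Bf x v = 0) : reflL v x = x := by
  rw [reflL_apply, h]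
  simp

/-- Reflection as a linear equivalence. -/
noncomputable def reflE (v : EuclideanSpace ℝ (Fin (d+2))) (hv : Bf v v ≠ 0) :
    EuclideanSpace ℝ (Fin (d+2)) ≃ₗ[ℝ] EuclideanSpace ℝ (Fin (d+2)) :=
  { reflL v with
    invFun := reflL v
    left_inv := reflL_invol v hv
    right_inv := reflL_invol v hv }

lemma reflE_apply (v : E) (hv : Bf v v ≠ 0) (x : E) : reflE v hv x = reflL v x := rfl

/-- Product (composition) of a list of reflections. -/
noncomputable def prodE : List {v : EuclideanSpace ℝ (Fin (d+2)) // Bf v v ≠ 0} →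
    (EuclideanSpace ℝ (Fin (d+2)) ≃ₗ[ℝ] EuclideanSpace ℝ (Fin (d+2)))
  | [] => LinearEquiv.refl ℝ _
  | v :: l => (prodE l).trans (reflE v.1 v.2)

lemma prodE_nil (x : E) : prodE ([] : List {v : EuclideanSpace ℝ (Fin (d+2)) // Bf v v ≠ 0}) x = x := rfl

lemma prodE_cons (v : {v : EuclideanSpace ℝ (Fin (d+2)) // Bf v v ≠ 0})
    (l : List {v : EuclideanSpace ℝ (Fin (d+2)) // Bf v v ≠ 0}) (x : E) :
    prodE (v :: l) x = reflL v.1 (prodE l x) := rfl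

lemma Bf_prodE (l : List {v : EuclideanSpace ℝ (Fin (d+2)) // Bf v v ≠ 0}) (x y : E) :
    Bf (prodE l x) (prodE l y) = Bf x y := by
  induction l with
  | nil => rfl
  | cons v l ih => rw [prodE_cons, prodE_cons, Bf_reflL v.1 v.2, ih]

/-- Cartan–Dieudonné style decomposition. -/
lemma decomp : ∀ (m : ℕ) (L : EuclideanSpace ℝ (Fin (d+2)) ≃ₗ[ℝ] EuclideanSpace ℝ (Fin (d+2))),
    (∀ x y, Bf (L x) (L y) = Bf x y) →
    (∀ i : Fin (d+2), (i : ℕ) + m < d + 2 → L (ev i) = ev i) →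
    ∃ l : List {v : EuclideanSpace ℝ (Fin (d+2)) // Bf v v ≠ 0}, ∀ x, L x = prodE l x := by
  intro m
  induction m with
  | zero =>
    intro L hB hfix
    refine ⟨[], fun x => ?_⟩
    rw [prodE_nil]
    apply eq_of_Bf_single
    intro i
    have : L (ev i) = ev i := hfix i (by omega)
    calc Bf (L x) (ev i) = Bf (L x) (L (ev i)) := by rw [this]
    _ = Bf x (ev i) := hB x (ev i)
  | succ m ih =>
    intro L hB hfix
    by_cases hm : m < d + 2
    case neg =>
      exact ih L hB (fun i hi => absurd hi (by omega))
    case pos =>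
    set k : Fin (d+2) := ⟨d + 1 - m, by omega⟩ with hk
    set x : EuclideanSpace ℝ (Fin (d+2)) := ev k with hxdef
    have hq : Bf x x ≠ 0 := Bf_single_self k
    have hLx : Bf (L x) (L x) = Bf x x := hB x x
    have horth : ∀ i : Fin (d+2), (i : ℕ) + (m+1) < d + 2 → Bf (ev i) (L x) = Bf (ev i) x := by
      intro i hi
      calc Bf (ev i) (L x) = Bf (L (ev i)) (L x) := by rw [hfix i hi]
      _ = Bf (ev i) x := hB (ev i) x
    have hik : ∀ i : Fin (d+2), (i : ℕ) + (m+1) < d + 2 → Bf (ev i) x = 0 := by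
      intro i hi
      apply Bf_single_ne
      intro h
      rw [h] at hi
      simp only [hk] at hi
      omega
    by_cases hu : Bf (L x - x) (L x - x) ≠ 0
    · -- one reflection suffices
      have hLxu : Bf (L x - x) (L x - x) = 2 * Bf (L x) (L x - x) := by
        have h1 := Bf_sub_left (L x) x (L x - x)
        have h2 := Bf_sub_right (L x) (L x) x
        have h3 := Bf_sub_right x (L x) x
        have h4 := Bf_symm x (L x)
        linarith
      set L' := L.trans (reflE (L x - x) hu) with hL'
      have hL'app : ∀ a, L' a = reflL (L x - x) (L a) := fun a => rfl
      have hB' : ∀ a b, Bf (L' a) (L' b) = Bf a b := by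
        intro a b
        rw [hL'app, hL'app, Bf_reflL _ hu, hB]
      have hLxu' : Bf (L x) (L x - x) ≠ 0 := by
        intro h; rw [h] at hLxu; simp at hLxu; exact hu hLxu
      have hfixk : L' x = x := by
        rw [hL'app, reflL_apply, hLxu]
        rw [show 2 * Bf (L x) (L x - x) / (2 * Bf (L x) (L x - x)) = 1 by field_simp]
        rw [one_smul]
        abel
      have hfix' : ∀ i : Fin (d+2), (i : ℕ) + m < d + 2 → L' (ev i) = ev i := by
        intro i hi
        by_cases hlt : (i : ℕ) + (m + 1) < d + 2
        · rw [hL'app, hfix i hlt]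
          apply reflL_of_orth
          rw [Bf_sub_right, horth i hlt, sub_self]
        · have : i = k := by
            apply Fin.ext
            simp only [hk]
            omega
          rw [this, ← hxdef]
          exact hfixk
      obtain ⟨l, hl⟩ := ih L' hB' hfix'
      refine ⟨⟨L x - x, hu⟩ :: l, fun a => ?_⟩
      rw [prodE_cons, ← hl a, hL'app, reflL_invol _ hu]
    · -- two reflections
      push_neg at hu
      have hww : Bf (L x + x) (L x + x) = 2 * Bf (L x) (L x + x) := by
        have h1 := Bf_add_left (L x) x (L x + x)
        have h2 := Bf_add_right (L x) (L x) x
        have h3 := Bf_add_right x (L x) x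
        have h4 := Bf_symm x (L x)
        linarith
      have hsum : Bf (L x - x) (L x - x) + Bf (L x + x) (L x + x) = 4 * Bf x x := by
        have h1 := Bf_sub_left (L x) x (L x - x)
        have h2 := Bf_sub_right (L x) (L x) x
        have h3 := Bf_sub_right x (L x) x
        have h4 := Bf_add_left (L x) x (L x + x)
        have h5 := Bf_add_right (L x) (L x) x
        have h6 := Bf_add_right x (L x) x
        have h7 := Bf_symm x (L x)
        linarith
      have hw : Bf (L x + x) (L x + x) ≠ 0 := by
        intro h
        rw [hu, h] at hsum
        have : Bf x x = 0 := by linarith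
        exact hq this
      have hLxw : Bf (L x) (L x + x) ≠ 0 := by
        intro h; rw [h] at hww; simp at hww; exact hw hww
      set L' := (L.trans (reflE (L x + x) hw)).trans (reflE x hq) with hL'
      have hL'app : ∀ a, L' a = reflL x (reflL (L x + x) (L a)) := fun a => rfl
      have hB' : ∀ a b, Bf (L' a) (L' b) = Bf a b := by
        intro a b
        rw [hL'app, hL'app, Bf_reflL _ hq, Bf_reflL _ hw, hB]
      have hfixk : L' x = x := by
        rw [hL'app, reflL_apply (L x + x), hww]
        rw [show 2 * Bf (L x) (L x + x) / (2 * Bf (L x) (L x + x)) = 1 by field_simp]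
        rw [one_smul, show L x - (L x + x) = -x by abel, reflL_apply, Bf_neg_left]
        rw [show 2 * -Bf x x / Bf x x = -2 by field_simp]
        rw [show (-x : EuclideanSpace ℝ (Fin (d+2))) - (-2 : ℝ) • x = x by module]
      have hfix' : ∀ i : Fin (d+2), (i : ℕ) + m < d + 2 → L' (ev i) = ev i := by
        intro i hi
        by_cases hlt : (i : ℕ) + (m + 1) < d + 2
        · rw [hL'app, hfix i hlt]
          rw [reflL_of_orth (L x + x) (ev i)
            (by rw [Bf_add_right, horth i hlt, hik i hlt]; simp)]
          exact reflL_of_orth x (ev i) (hik i hlt)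
        · have : i = k := by
            apply Fin.ext
            simp only [hk]
            omega
          rw [this, ← hxdef]
          exact hfixk
      obtain ⟨l, hl⟩ := ih L' hB' hfix'
      refine ⟨⟨L x + x, hw⟩ :: ⟨x, hq⟩ :: l, fun a => ?_⟩
      rw [prodE_cons, prodE_cons, ← hl a, hL'app, reflL_invol _ hq, reflL_invol _ hw]

/-- Reflection as a continuous linear map. -/
noncomputable def reflC (v : EuclideanSpace ℝ (Fin (d+2))) :
    EuclideanSpace ℝ (Fin (d+2)) →L[ℝ] EuclideanSpace ℝ (Fin (d+2)) :=
  (reflL v).toContinuousLinearMap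

lemma reflC_apply (v x : E) : reflC v x = x - (2 * Bf x v / Bf v v) • v := rfl

/-- `Bf · v` as a continuous linear functional, linearly in `v`. -/
noncomputable def Tf : EuclideanSpace ℝ (Fin (d+2)) →ₗ[ℝ]
    (EuclideanSpace ℝ (Fin (d+2)) →L[ℝ] ℝ) where
  toFun v := LinearMap.toContinuousLinearMap
    { toFun := fun x => Bf x v
      map_add' := fun x y => Bf_add_left x y v
      map_smul' := fun c x => Bf_smul_left c x v }
  map_add' v w := by
    ext x
    exact Bf_add_right x v w
  map_smul' c v := by
    ext x
    exact Bf_smul_right c x v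

lemma Tf_apply (v x : E) : Tf v x = Bf x v := rfl

lemma reflC_eq (v : E) :
    reflC v = ContinuousLinearMap.id ℝ (EuclideanSpace ℝ (Fin (d+2)))
      - (2 / Bf v v) • (Tf v).smulRight v := by
  ext x i
  simp only [reflC_apply, ContinuousLinearMap.sub_apply, ContinuousLinearMap.id_apply,
    ContinuousLinearMap.smul_apply, ContinuousLinearMap.smulRight_apply, Tf_apply,
    PiLp.sub_apply, PiLp.smul_apply, smul_eq_mul, smul_smul]
  ring_nf

lemma continuous_quad : Continuous (fun v : EuclideanSpace ℝ (Fin (d+2)) => Bf v v) := by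
  have : (fun v : EuclideanSpace ℝ (Fin (d+2)) => Bf v v)
      = (fun p : (EuclideanSpace ℝ (Fin (d+2)) →L[ℝ] ℝ) × EuclideanSpace ℝ (Fin (d+2)) => p.1 p.2)
        ∘ (fun v => (Tf v, v)) := rfl
  rw [this]
  exact isBoundedBilinearMap_apply.continuous.comp
    (Tf.continuous_of_finiteDimensional.prodMk continuous_id)

lemma continuousAt_reflC (v : EuclideanSpace ℝ (Fin (d+2))) (hv : Bf v v ≠ 0) :
    ContinuousAt reflC v := by
  have h1 : Continuous (fun w : EuclideanSpace ℝ (Fin (d+2)) => (Tf w).smulRight w) :=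
    isBoundedBilinearMap_smulRight.continuous.comp
      (Tf.continuous_of_finiteDimensional.prodMk continuous_id)
  have h2 : ContinuousAt (fun w : EuclideanSpace ℝ (Fin (d+2)) => (2 : ℝ) / Bf w w) v :=
    (continuousAt_const.div continuous_quad.continuousAt hv)
  have : ContinuousAt (fun w : EuclideanSpace ℝ (Fin (d+2)) =>
      ContinuousLinearMap.id ℝ (EuclideanSpace ℝ (Fin (d+2)))
        - (2 / Bf w w) • (Tf w).smulRight w) v :=
    continuousAt_const.sub (h2.smul h1.continuousAt)
  exact this.congr (by filter_upwards with w using (reflC_eq w).symm)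

/-- Rational vectors. -/
def IsRat (x : EuclideanSpace ℝ (Fin (d+2))) : Prop := ∀ i, ∃ r : ℚ, x i = (r : ℝ)

lemma exists_rat_vec (v : EuclideanSpace ℝ (Fin (d+2))) {r : ℝ} (hr : 0 < r) :
    ∃ w : EuclideanSpace ℝ (Fin (d+2)), IsRat w ∧ ‖w - v‖ < r := by
  set r' : ℝ := r / (2 * (d + 2)) with hr'
  have hr'pos : 0 < r' := by positivity
  have hchoice : ∀ i : Fin (d+2), ∃ q : ℚ, |v i - q| < r' := fun i => exists_rat_near (v i) hr'pos
  choose q hq using hchoice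
  refine ⟨(WithLp.equiv 2 _).symm (fun i => (q i : ℝ)), fun i => ⟨q i, by simp⟩, ?_⟩
  have hnorm := EuclideanSpace.norm_eq
    ((WithLp.equiv 2 (Fin (d+2) → ℝ)).symm (fun i => (q i : ℝ)) - v)
  rw [hnorm]
  have hbound : ∑ i : Fin (d+2),
      ‖((WithLp.equiv 2 (Fin (d+2) → ℝ)).symm (fun i => (q i : ℝ)) - v) i‖ ^ 2
      ≤ ∑ _i : Fin (d+2), r' ^ 2 := by
    apply Finset.sum_le_sum
    intro i _
    have : ‖((WithLp.equiv 2 (Fin (d+2) → ℝ)).symm (fun i => (q i : ℝ)) - v) i‖ = |v i - q i| := by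
      simp [Real.norm_eq_abs, abs_sub_comm]
    rw [this]
    have := le_of_lt (hq i)
    nlinarith [abs_nonneg (v i - q i)]
  have hle : Real.sqrt (∑ i : Fin (d+2),
      ‖((WithLp.equiv 2 (Fin (d+2) → ℝ)).symm (fun i => (q i : ℝ)) - v) i‖ ^ 2)
      ≤ Real.sqrt (∑ _i : Fin (d+2), r' ^ 2) := Real.sqrt_le_sqrt hbound
  apply lt_of_le_of_lt hle
  rw [Finset.sum_const, Finset.card_univ, Fintype.card_fin]
  have heq : ((d+2) : ℕ) • r' ^ 2 = ((d:ℝ)+2) * r' ^ 2 := by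
    push_cast [nsmul_eq_mul]
    ring
  rw [heq]
  have hd : (1:ℝ) ≤ (d:ℝ) + 2 := by
    have : (0:ℝ) ≤ (d:ℝ) := Nat.cast_nonneg d
    linarith
  have h1 : ((d:ℝ)+2) * r' ^ 2 ≤ (((d:ℝ)+2) * r') ^ 2 := by nlinarith [sq_nonneg r']
  have h2 : Real.sqrt (((d:ℝ)+2) * r' ^ 2) ≤ ((d:ℝ)+2) * r' := by
    have := Real.sqrt_le_sqrt h1
    rwa [Real.sqrt_sq (by positivity)] at this
  apply lt_of_le_of_lt h2
  have : ((d:ℝ)+2) * r' = r / 2 := by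
    rw [hr']
    field_simp
  rw [this]
  linarith

lemma refl_approx (v : EuclideanSpace ℝ (Fin (d+2))) (hv : Bf v v ≠ 0) {δ : ℝ} (hδ : 0 < δ) :
    ∃ w, IsRat w ∧ ∃ hw : Bf w w ≠ 0, ‖reflC v - reflC w‖ < δ := by
  have hc := continuousAt_reflC v hv
  rw [Metric.continuousAt_iff] at hc
  obtain ⟨r1, hr1, hball⟩ := hc δ hδ
  have hqc : ContinuousAt (fun w : EuclideanSpace ℝ (Fin (d+2)) => Bf w w) v :=
    continuous_quad.continuousAt
  rw [Metric.continuousAt_iff] at hqc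
  obtain ⟨r2, hr2, hball2⟩ := hqc (|Bf v v|) (abs_pos.mpr hv)
  obtain ⟨w, hwrat, hwnorm⟩ := exists_rat_vec v (lt_min hr1 hr2)
  have hdist : dist w v < min r1 r2 := by rwa [dist_eq_norm]
  have hw0 : Bf w w ≠ 0 := by
    intro h0
    have h2 := hball2 (lt_of_lt_of_le hdist (min_le_right r1 r2))
    rw [h0, dist_eq_norm, zero_sub, norm_neg, Real.norm_eq_abs] at h2
    exact lt_irrefl _ h2
  refine ⟨w, hwrat, hw0, ?_⟩
  have h1 := hball (lt_of_lt_of_le hdist (min_le_left r1 r2))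
  rw [dist_eq_norm] at h1
  rwa [norm_sub_rev] at h1

lemma approx_list : ∀ (l : List {v : EuclideanSpace ℝ (Fin (d+2)) // Bf v v ≠ 0}) {ε : ℝ},
    0 < ε →
    ∃ l' : List {v : EuclideanSpace ℝ (Fin (d+2)) // Bf v v ≠ 0},
      (∀ v' ∈ l', IsRat v'.1) ∧
      ‖(prodE l).toLinearMap.toContinuousLinearMap
        - (prodE l').toLinearMap.toContinuousLinearMap‖ < ε := by
  intro l
  induction l with
  | nil =>
    intro ε hε
    refine ⟨[], by simp, ?_⟩
    rw [sub_self, norm_zero]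
    exact hε
  | cons v l ih =>
    intro ε hε
    have ha : (0:ℝ) < ‖reflC v.1‖ + 1 := by positivity
    obtain ⟨l', hl'rat, hl'norm⟩ := ih (ε := ε / (2 * (‖reflC v.1‖ + 1))) (by positivity)
    set Q := (prodE l').toLinearMap.toContinuousLinearMap with hQ
    have hb : (0:ℝ) < ‖Q‖ + 1 := by positivity
    obtain ⟨w, hwrat, hw0, hwnorm⟩ := refl_approx v.1 v.2 (δ := ε / (2 * (‖Q‖ + 1)))
      (by positivity)
    refine ⟨⟨w, hw0⟩ :: l', ?_, ?_⟩
    · intro v' hv'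
      rcases List.mem_cons.mp hv' with h | h
      · rw [h]; exact hwrat
      · exact hl'rat v' h
    · set P := (prodE l).toLinearMap.toContinuousLinearMap with hP
      have hcons1 : (prodE (v :: l)).toLinearMap.toContinuousLinearMap = (reflC v.1).comp P :=
        ContinuousLinearMap.ext fun x => rfl
      have hcons2 : (prodE (⟨w, hw0⟩ :: l')).toLinearMap.toContinuousLinearMap
          = (reflC w).comp Q := ContinuousLinearMap.ext fun x => rfl
      rw [hcons1, hcons2]
      have step1 : ‖(reflC v.1).comp P - (reflC w).comp Q‖
          ≤ ‖(reflC v.1).comp P - (reflC v.1).comp Q‖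
            + ‖(reflC v.1).comp Q - (reflC w).comp Q‖ := by
        have h := norm_add_le ((reflC v.1).comp P - (reflC v.1).comp Q)
          ((reflC v.1).comp Q - (reflC w).comp Q)
        rwa [sub_add_sub_cancel] at h
      have step2 : ‖(reflC v.1).comp P - (reflC v.1).comp Q‖ ≤ ‖reflC v.1‖ * ‖P - Q‖ := by
        rw [← ContinuousLinearMap.comp_sub]
        exact ContinuousLinearMap.opNorm_comp_le _ _
      have step3 : ‖(reflC v.1).comp Q - (reflC w).comp Q‖ ≤ ‖reflC v.1 - reflC w‖ * ‖Q‖ := by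
        rw [← ContinuousLinearMap.sub_comp]
        exact ContinuousLinearMap.opNorm_comp_le _ _
      have h1 : ‖reflC v.1‖ * ‖P - Q‖ < ε / 2 := by
        have hmul : (‖reflC v.1‖ + 1) * ‖P - Q‖ < (‖reflC v.1‖ + 1) * (ε / (2 * (‖reflC v.1‖ + 1))) :=
          mul_lt_mul_of_pos_left hl'norm ha
        have heq : (‖reflC v.1‖ + 1) * (ε / (2 * (‖reflC v.1‖ + 1))) = ε / 2 := by
          field_simp
        nlinarith [norm_nonneg (P - Q)]
      have h2 : ‖reflC v.1 - reflC w‖ * ‖Q‖ < ε / 2 := by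
        have hmul : ‖reflC v.1 - reflC w‖ * (‖Q‖ + 1) < (ε / (2 * (‖Q‖ + 1))) * (‖Q‖ + 1) :=
          mul_lt_mul_of_pos_right hwnorm hb
        have heq : (ε / (2 * (‖Q‖ + 1))) * (‖Q‖ + 1) = ε / 2 := by
          field_simp
        nlinarith [norm_nonneg (reflC v.1 - reflC w)]
      linarith

lemma isRat_Bf {x w : EuclideanSpace ℝ (Fin (d+2))} (hx : IsRat x) (hw : IsRat w) :
    ∃ r : ℚ, Bf x w = (r : ℝ) := by
  choose rx hrx using hx
  choose rww hrw using hw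
  refine ⟨rx 0 * rww 0 - ∑ i ∈ Finset.univ.filter (fun i => i ≠ (0 : Fin (d+2))), rx i * rww i, ?_⟩
  simp only [Bf, hrx, hrw]
  push_cast
  ring

lemma isRat_reflL {w x : EuclideanSpace ℝ (Fin (d+2))} (hw : IsRat w) (hx : IsRat x) :
    IsRat (reflL w x) := by
  obtain ⟨a, ha⟩ := isRat_Bf hx hw
  obtain ⟨b, hb⟩ := isRat_Bf hw hw
  intro i
  obtain ⟨xi, hxi⟩ := hx i
  obtain ⟨wi, hwi⟩ := hw i
  refine ⟨xi - 2 * a / b * wi, ?_⟩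
  rw [reflL_apply]
  simp only [PiLp.sub_apply, PiLp.smul_apply, smul_eq_mul, ha, hb, hxi, hwi]
  push_cast
  ring

lemma isRat_prodE (l : List {v : EuclideanSpace ℝ (Fin (d+2)) // Bf v v ≠ 0})
    (hrat : ∀ v ∈ l, IsRat v.1) {x : EuclideanSpace ℝ (Fin (d+2))} (hx : IsRat x) :
    IsRat (prodE l x) := by
  induction l with
  | nil => exact hx
  | cons v l ih =>
    rw [prodE_cons]
    exact isRat_reflL (hrat v (List.mem_cons_self (a := v) (l := l)))
      (ih (fun u hu => hrat u (List.mem_cons_of_mem v hu)))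

end LorentzAux

/-- Every Lorentz transformation of ℝᵈ can be approximated arbitrarily well in
operator norm by a Lorentz transformation mapping ℚᵈ into ℚᵈ. -/
theorem lorentz_approx_rational (d : ℕ)
    (L : EuclideanSpace ℝ (Fin (d + 2)) ≃ₗ[ℝ] EuclideanSpace ℝ (Fin (d + 2)))
    (hL : ∀ x, mink d (L x) = mink d x) (ε : ℝ) (hε : 0 < ε) :
    ∃ Ls : EuclideanSpace ℝ (Fin (d + 2)) ≃ₗ[ℝ] EuclideanSpace ℝ (Fin (d + 2)),
      (∀ x, mink d (Ls x) = mink d x) ∧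
      (∀ x : EuclideanSpace ℝ (Fin (d + 2)), (∀ i, ∃ r : ℚ, x i = (r : ℝ)) →
        (∀ i, ∃ r : ℚ, Ls x i = (r : ℝ))) ∧
      ‖L.toLinearMap.toContinuousLinearMap - Ls.toLinearMap.toContinuousLinearMap‖ < ε := by
  classical
  have hB := LorentzAux.Bf_of_mink L hL
  obtain ⟨l, hl⟩ := LorentzAux.decomp (d+2) L hB (fun i hi => absurd hi (by omega))
  obtain ⟨l', hl'rat, hl'norm⟩ := LorentzAux.approx_list l hε
  refine ⟨LorentzAux.prodE l', ?_, ?_, ?_⟩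
  · intro x
    rw [LorentzAux.mink_eq_Bf, LorentzAux.mink_eq_Bf, LorentzAux.Bf_prodE]
  · intro x hx i
    exact LorentzAux.isRat_prodE l' hl'rat hx i
  · have hLeq : L.toLinearMap.toContinuousLinearMap
        = (LorentzAux.prodE l).toLinearMap.toContinuousLinearMap :=
      ContinuousLinearMap.ext fun x => hl x
    rw [hLeq]
    exact hl'norm
end

section
/- For every unit vector direction: given rational v ∈ ℚᵈ with v₁ = 1 and v₂² + ⋯ + v_d² < 1, and every ε > 0, there exists w ∈ ℚᵈ with |v − w| < ε such that w = L*(e₁)/L*(e₁)₁ for some Lorentz transformation L* of ℝᵈ mapping ℚᵈ into ℚᵈ (where e₁ = (1,0,…,0)). -/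
namespace RationalLorentzAux

abbrev E (d : ℕ) := EuclideanSpace ℝ (Fin (d + 2))

noncomputable def B (d : ℕ) (x y : E d) : ℝ :=
  x 0 * y 0 - ∑ i ∈ Finset.univ.filter (fun i => i ≠ (0 : Fin (d + 2))), x i * y i

lemma B_eq (d : ℕ) (x y : E d) : B d x y =
    x 0 * y 0 - ∑ i ∈ Finset.univ.filter (fun i => i ≠ (0 : Fin (d + 2))), x i * y i := rfl

lemma B_add_left (d : ℕ) (x y z : E d) : B d (x + y) z = B d x z + B d y z := by
  simp [B, PiLp.add_apply, add_mul, Finset.sum_add_distrib]; ring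

lemma B_smul_left (d : ℕ) (c : ℝ) (x y : E d) : B d (c • x) y = c * B d x y := by
  simp only [B, PiLp.smul_apply, smul_eq_mul]
  rw [mul_sub, Finset.mul_sum]
  congr 1
  · ring
  · exact Finset.sum_congr rfl (fun i _ => by ring)

lemma B_symm (d : ℕ) (x y : E d) : B d x y = B d y x := by
  simp [B, mul_comm]

lemma B_sub_left (d : ℕ) (x y z : E d) : B d (x - y) z = B d x z - B d y z := by
  simp [B, PiLp.sub_apply, sub_mul, Finset.sum_sub_distrib]; ring

lemma B_sub_right (d : ℕ) (x y z : E d) : B d x (y - z) = B d x y - B d x z := by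
  rw [B_symm, B_sub_left, B_symm d y x, B_symm d z x]

lemma B_smul_right (d : ℕ) (c : ℝ) (x y : E d) : B d x (c • y) = c * B d x y := by
  rw [B_symm, B_smul_left, B_symm]

lemma B_single_left (d : ℕ) (y : E d) : B d (EuclideanSpace.single 0 1) y = y 0 := by
  simp [B, EuclideanSpace.single_apply]

lemma mink_eq_B (d : ℕ) (x : E d) : mink d x = B d x x := by
  simp [mink, B, sq]

lemma isRat_B (d : ℕ) (x y : E d) (hx : ∀ i, ∃ r : ℚ, x i = (r : ℝ))
    (hy : ∀ i, ∃ r : ℚ, y i = (r : ℝ)) : ∃ r : ℚ, B d x y = (r : ℝ) := by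
  choose rx hrx using hx
  choose ry hry using hy
  refine ⟨rx 0 * ry 0 - ∑ i ∈ Finset.univ.filter (fun i => i ≠ (0 : Fin (d + 2))), rx i * ry i, ?_⟩
  push_cast
  simp [B, hrx, hry]

/-- Minkowski reflection through q. -/
noncomputable def refl0 (d : ℕ) (q : E d) (x : E d) : E d :=
  x - (2 * B d x q / B d q q) • q

lemma B_refl0_left (d : ℕ) (q : E d) (x y : E d) :
    B d (refl0 d q x) y = B d x y - 2 * B d x q / B d q q * B d q y := by
  rw [refl0, B_sub_left, B_smul_left]

lemma refl0_refl0 (d : ℕ) (q : E d) (hq : B d q q ≠ 0) (x : E d) :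
    refl0 d q (refl0 d q x) = refl0 d q x - (2 * (- B d x q) / B d q q) • q := by
  rw [refl0, refl0]
  congr 2
  rw [B_sub_left, B_smul_left]
  field_simp
  ring

lemma refl0_involutive (d : ℕ) (q : E d) (hq : B d q q ≠ 0) (x : E d) :
    refl0 d q (refl0 d q x) = x := by
  rw [refl0_refl0 d q hq, refl0]
  have h : (2 * (- B d x q) / B d q q) = -(2 * B d x q / B d q q) := by ring
  rw [h, neg_smul, sub_neg_eq_add, sub_add_cancel]

lemma mink_refl0 (d : ℕ) (q : E d) (hq : B d q q ≠ 0) (x : E d) :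
    mink d (refl0 d q x) = mink d x := by
  rw [mink_eq_B, mink_eq_B, B_refl0_left d q, refl0, B_sub_right, B_sub_right,
    B_smul_right, B_smul_right]
  rw [B_symm d q x]
  field_simp
  ring

lemma isRat_refl0 (d : ℕ) (q : E d) (hqQ : ∀ i, ∃ r : ℚ, q i = (r : ℝ))
    (x : E d) (hx : ∀ i, ∃ r : ℚ, x i = (r : ℝ)) :
    ∀ i, ∃ r : ℚ, refl0 d q x i = (r : ℝ) := by
  intro i
  obtain ⟨r1, hr1⟩ := isRat_B d x q hx hqQ
  obtain ⟨r2, hr2⟩ := isRat_B d q q hqQ hqQ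
  obtain ⟨rx, hrx⟩ := hx i
  obtain ⟨rq, hrq⟩ := hqQ i
  refine ⟨rx - 2 * r1 / r2 * rq, ?_⟩
  simp only [refl0, PiLp.sub_apply, PiLp.smul_apply, smul_eq_mul, hrx, hrq, hr1, hr2]
  push_cast
  ring

noncomputable def reflE (d : ℕ) (q : E d) (hq : B d q q ≠ 0) : E d ≃ₗ[ℝ] E d where
  toFun := refl0 d q
  invFun := refl0 d q
  left_inv := refl0_involutive d q hq
  right_inv := refl0_involutive d q hq
  map_add' x y := by
    simp only [refl0, B_add_left]
    have h : (2 * (B d x q + B d y q) / B d q q) • q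
        = (2 * B d x q / B d q q) • q + (2 * B d y q / B d q q) • q := by
      rw [← add_smul]; congr 1; ring
    rw [h]; abel
  map_smul' c x := by
    simp only [refl0, B_smul_left, RingHom.id_apply, smul_sub, smul_smul]
    congr 1
    congr 1
    ring

lemma reflE_apply (d : ℕ) (q : E d) (hq : B d q q ≠ 0) (x : E d) :
    reflE d q hq x = x - (2 * B d x q / B d q q) • q := rfl

end RationalLorentzAux

set_option maxHeartbeats 1000000 in
open RationalLorentzAux in
/-- Every rational velocity vector of speed < 1 can be approximated by the
normalized image of e₁ under a Lorentz transformation preserving ℚᵈ. -/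
theorem rational_velocity_from_rational_lorentz (d : ℕ)
    (v : EuclideanSpace ℝ (Fin (d + 2))) (hvQ : ∀ i, ∃ r : ℚ, v i = (r : ℝ))
    (hv1 : v 0 = 1)
    (hvs : ∑ i ∈ Finset.univ.filter (fun i => i ≠ (0 : Fin (d + 2))), v i ^ 2 < 1)
    (ε : ℝ) (hε : 0 < ε) :
    ∃ w : EuclideanSpace ℝ (Fin (d + 2)),
      (∀ i, ∃ r : ℚ, w i = (r : ℝ)) ∧ ‖v - w‖ < ε ∧
      ∃ Ls : EuclideanSpace ℝ (Fin (d + 2)) ≃ₗ[ℝ] EuclideanSpace ℝ (Fin (d + 2)),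
        (∀ x, mink d (Ls x) = mink d x) ∧
        (∀ x : EuclideanSpace ℝ (Fin (d + 2)), (∀ i, ∃ r : ℚ, x i = (r : ℝ)) →
          (∀ i, ∃ r : ℚ, Ls x i = (r : ℝ))) ∧
        w = (Ls (EuclideanSpace.single 0 1) 0)⁻¹ • Ls (EuclideanSpace.single 0 1) := by
  classical
  set m : ℝ := ∑ i ∈ Finset.univ.filter (fun i => i ≠ (0 : Fin (d + 2))), v i ^ 2 with hm_def
  have hm0 : 0 ≤ m := Finset.sum_nonneg (fun i _ => sq_nonneg _)
  set e1 : E d := EuclideanSpace.single 0 1 with he1_def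
  have he1_0 : e1 0 = 1 := by simp [he1_def, EuclideanSpace.single_apply]
  have he1_ne : ∀ i : Fin (d + 2), i ≠ 0 → e1 i = 0 := by
    intro i hi; simp [he1_def, EuclideanSpace.single_apply, hi]
  by_cases hm : m = 0
  · -- v = e₁; identity works
    have hvz : ∀ i : Fin (d + 2), i ≠ 0 → v i = 0 := by
      intro i hi
      have := (Finset.sum_eq_zero_iff_of_nonneg (fun j _ => sq_nonneg (v j))).mp hm i
        (by simp [hi])
      exact pow_eq_zero_iff two_ne_zero |>.mp this
    have hve : v = e1 := by
      ext i
      by_cases hi : i = 0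
      · subst hi; rw [hv1, he1_0]
      · rw [hvz i hi, he1_ne i hi]
    refine ⟨v, hvQ, by simpa using hε, LinearEquiv.refl ℝ _, fun x => rfl,
      fun x hx => hx, ?_⟩
    simp only [LinearEquiv.refl_apply]
    rw [hve, he1_def]
    have : (EuclideanSpace.single (0 : Fin (d+2)) (1:ℝ)) 0 = 1 := by
      simp [EuclideanSpace.single_apply]
    rw [this, inv_one, one_smul]
  · -- main case : 0 < m
    have hm_pos : 0 < m := lt_of_le_of_ne hm0 (Ne.symm hm)
    have hm1 : m < 1 := hvs
    -- m is rational
    have hmQ : ∃ r : ℚ, m = (r : ℝ) := by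
      choose rv hrv using hvQ
      refine ⟨∑ i ∈ Finset.univ.filter (fun i => i ≠ (0 : Fin (d + 2))), rv i ^ 2, ?_⟩
      push_cast
      simp [hm_def, hrv]
    obtain ⟨mq, hmq⟩ := hmQ
    clear_value m
    -- choose rational t near t* = 1/(1+√(1-m))
    set s : ℝ := Real.sqrt (1 - m) with hs_def
    have hs2 : s ^ 2 = 1 - m := Real.sq_sqrt (by linarith)
    have hs_pos : 0 < s := Real.sqrt_pos.mpr (by linarith)
    clear_value s
    have hs1 : s < 1 := by nlinarith [hs2, hs_pos]
    set tstar : ℝ := (1 + s)⁻¹ with htstar_def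
    set δ : ℝ := ε / (Real.sqrt m + 1) with hδ_def
    have hsm : (0:ℝ) ≤ Real.sqrt m := Real.sqrt_nonneg m
    have hδ_pos : 0 < δ := by rw [hδ_def]; positivity
    set g : ℝ → ℝ := fun T => 2 * T / (m * T ^ 2 + 1) with hg_def
    have hden : ∀ T : ℝ, m * T ^ 2 + 1 ≠ 0 := by
      intro T; positivity
    have hg_cont : Continuous g := by
      apply Continuous.div (by continuity) (by continuity) hden
    have h1s : (0:ℝ) < 1 + s := by linarith
    have h1s' : (1 + s) ≠ 0 := ne_of_gt h1s
    have htstar_pos : 0 < tstar := by rw [htstar_def]; positivity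
    have hg_tstar : g tstar = 1 := by
      have key : 2 * tstar = m * tstar ^ 2 + 1 := by
        rw [htstar_def]
        field_simp
        linear_combination (-1) * hs2
      simp only [hg_def]
      rw [div_eq_one_iff_eq (hden _)]
      exact key
    clear_value g
    have hmt_tstar : m * tstar ^ 2 < 1 := by
      have hkey : m * tstar ^ 2 - 1 = -(2 * s) * (1 + s)⁻¹ := by
        rw [htstar_def, inv_pow]
        field_simp
        linear_combination hs2
      have h2 : 0 < s * (1 + s)⁻¹ := mul_pos hs_pos (inv_pos.mpr h1s)
      have h3 : -(2 * s) * (1 + s)⁻¹ = -(2 * (s * (1 + s)⁻¹)) := by ring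
      rw [h3] at hkey
      linarith
    clear_value tstar δ
    -- open set of good parameters
    set S : Set ℝ := (fun T => |g T - 1|) ⁻¹' (Set.Iio δ) ∩
        ((fun T => m * T ^ 2) ⁻¹' (Set.Iio 1) ∩ Set.Ioi 0) with hS_def
    have hS_open : IsOpen S := by
      apply IsOpen.inter
      · exact (isOpen_Iio).preimage ((hg_cont.sub continuous_const).abs)
      · exact IsOpen.inter ((isOpen_Iio).preimage
          (continuous_const.mul (continuous_pow 2))) isOpen_Ioi
    have hS_mem : tstar ∈ S := by
      constructor
      · simp [Set.mem_preimage, hg_tstar, hδ_pos]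
      · exact ⟨hmt_tstar, htstar_pos⟩
    obtain ⟨η, hη_pos, hball⟩ := Metric.isOpen_iff.mp hS_open tstar hS_mem
    obtain ⟨tq, htq1, htq2⟩ := exists_rat_btwn (lt_add_of_pos_right tstar hη_pos)
    have htq_mem : (tq : ℝ) ∈ S := by
      apply hball
      rw [Metric.mem_ball, Real.dist_eq, abs_of_pos (by linarith)]
      linarith
    obtain ⟨hgT, hmT, hT_pos⟩ := htq_mem
    simp only [Set.mem_preimage, Set.mem_Iio, Set.mem_Ioi] at hgT hmT hT_pos
    set T : ℝ := (tq : ℝ) with hT_def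
    rw [hg_def] at hgT
    simp only at hgT
    -- the boost parameters
    set lam : ℝ := 2 * T / (m * T ^ 2 + 1) with hlam_def
    set a : ℝ := (m * T ^ 2 + 1) / (1 - m * T ^ 2) with ha_def
    have hmT2_pos : 0 < m * T ^ 2 := mul_pos hm_pos (pow_pos hT_pos 2)
    have hden1 : 0 < m * T ^ 2 + 1 := by linarith
    have hden2 : 0 < 1 - m * T ^ 2 := by linarith [hmT]
    have ha1 : 1 < a := by
      rw [ha_def, lt_div_iff₀ hden2]; linarith
    have key : a ^ 2 * (1 - lam ^ 2 * m) = 1 := by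
      rw [ha_def, hlam_def]
      field_simp
      ring
    have hlam_abs : |lam - 1| < δ := hgT
    have hlamQ : ∃ r : ℚ, lam = (r : ℝ) := by
      refine ⟨2 * tq / (mq * tq ^ 2 + 1), ?_⟩
      rw [hlam_def, hmq, hT_def]; push_cast; ring
    have haQ : ∃ r : ℚ, a = (r : ℝ) := by
      refine ⟨(mq * tq ^ 2 + 1) / (1 - mq * tq ^ 2), ?_⟩
      rw [ha_def, hmq, hT_def]; push_cast; ring
    clear_value lam a
    have ha0 : a ≠ 0 := by linarith
    -- the rational point p on the hyperboloid
    obtain ⟨p, hp⟩ : ∃ p : E d, ∀ i, p i = if i = 0 then a else a * lam * v i :=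
      ⟨WithLp.toLp 2 (fun i => if i = 0 then a else a * lam * v i : ∀ _ : Fin (d + 2), ℝ), fun i => rfl⟩
    have hp0 : p 0 = a := by rw [hp]; simp
    have hpi : ∀ i : Fin (d + 2), i ≠ 0 → p i = a * lam * v i := by
      intro i hi; rw [hp]; simp [hi]
    have hpQ : ∀ i, ∃ r : ℚ, p i = (r : ℝ) := by
      intro i
      obtain ⟨ra, hra⟩ := haQ
      obtain ⟨rl, hrl⟩ := hlamQ
      by_cases hi : i = 0
      · subst hi; exact ⟨ra, by rw [hp0, hra]⟩
      · obtain ⟨rv, hrv⟩ := hvQ i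
        exact ⟨ra * rl * rv, by rw [hpi i hi, hra, hrl, hrv]; push_cast; ring⟩
    have hSum : ∑ i ∈ Finset.univ.filter (fun i => i ≠ (0 : Fin (d + 2))), p i * p i
        = a ^ 2 * lam ^ 2 * m := by
      rw [hm_def, Finset.mul_sum]
      refine Finset.sum_congr rfl (fun i hi => ?_)
      rw [hpi i (Finset.mem_filter.mp hi).2]
      ring
    have hBpp : B d p p = 1 := by
      rw [B_eq, hp0, hSum]
      linear_combination key
    -- the reflection vector q = e₁ - p
    set q : E d := e1 - p with hDq
    have hq_coord : ∀ i, q i = e1 i - p i := fun i => rfl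
    have hBe1q : B d e1 q = 1 - a := by
      rw [he1_def, B_single_left, hq_coord, he1_0, hp0]
    have hBpe1 : B d p e1 = a := by
      rw [B_symm, he1_def, B_single_left, hp0]
    have hBqq : B d q q = 2 - 2 * a := by
      rw [hDq, B_sub_left, ← hDq, hBe1q, B_sub_right, hBpe1, hBpp]
      ring
    have hBqq_ne : B d q q ≠ 0 := by rw [hBqq]; intro h; linarith
    have hqQ : ∀ i, ∃ r : ℚ, q i = (r : ℝ) := by
      intro i
      obtain ⟨rp, hrp⟩ := hpQ i
      by_cases hi : i = 0
      · subst hi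
        exact ⟨1 - rp, by rw [hq_coord, he1_0, hrp]; push_cast; ring⟩
      · exact ⟨-rp, by rw [hq_coord, he1_ne i hi, hrp]; push_cast; ring⟩
    clear_value q
    -- the Lorentz transformation
    refine ⟨a⁻¹ • p, ?_, ?_, reflE d q hBqq_ne, fun x => mink_refl0 d q hBqq_ne x,
      fun x hx => isRat_refl0 d q hqQ x hx, ?_⟩
    · -- rationality of w
      intro i
      obtain ⟨ra, hra⟩ := haQ
      obtain ⟨rp, hrp⟩ := hpQ i
      refine ⟨ra⁻¹ * rp, ?_⟩
      rw [PiLp.smul_apply, smul_eq_mul, hra, hrp]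
      push_cast; ring
    · -- the norm estimate
      have hw0 : (v - a⁻¹ • p) 0 = 0 := by
        rw [PiLp.sub_apply, PiLp.smul_apply, smul_eq_mul, hv1, hp0]
        field_simp
        ring
      have hwi : ∀ i : Fin (d + 2), i ≠ 0 → (v - a⁻¹ • p) i = (1 - lam) * v i := by
        intro i hi
        rw [PiLp.sub_apply, PiLp.smul_apply, smul_eq_mul, hpi i hi]
        field_simp
      have hnorm : ‖v - a⁻¹ • p‖ = Real.sqrt ((1 - lam) ^ 2 * m) := by
        rw [EuclideanSpace.norm_eq]
        congr 1
        rw [← Finset.sum_filter_add_sum_filter_not Finset.univ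
          (fun i => i = (0 : Fin (d + 2)))]
        have h1 : ∑ i ∈ Finset.univ.filter (fun i => i = (0 : Fin (d + 2))),
            ‖(v - a⁻¹ • p) i‖ ^ 2 = 0 := by
          rw [Finset.filter_eq' Finset.univ (0 : Fin (d + 2)), if_pos (Finset.mem_univ _),
            Finset.sum_singleton, hw0]
          simp
        rw [h1, zero_add, hm_def, Finset.mul_sum]
        refine Finset.sum_congr rfl (fun i hi => ?_)
        rw [hwi i (Finset.mem_filter.mp hi).2, Real.norm_eq_abs, sq_abs]
        ring
      rw [hnorm]
      clear hball hS_open hS_mem hg_cont hden hp hpi hpQ hqQ hq_coord hw0 hwi hnorm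
      have habs := abs_lt.mp hlam_abs
      have hδε : δ * (Real.sqrt m + 1) = ε := by
        rw [hδ_def]; exact div_mul_cancel₀ ε (by positivity)
      have hsqm : Real.sqrt m ^ 2 = m := Real.sq_sqrt hm0
      have h2 : (1 - lam) ^ 2 * m < ε ^ 2 := by
        have h3 : (1 - lam) ^ 2 < δ ^ 2 := by
          have h3' := sq_lt_sq' habs.1 habs.2
          calc (1 - lam) ^ 2 = (lam - 1) ^ 2 := by ring
            _ < δ ^ 2 := h3'
        have e2 : ε ^ 2 = δ ^ 2 * (m + 2 * Real.sqrt m + 1) := by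
          rw [← hδε]; linear_combination δ ^ 2 * hsqm
        have e4 : 0 < δ ^ 2 * (2 * Real.sqrt m + 1) := by positivity
        have e3 : δ ^ 2 * (m + 2 * Real.sqrt m + 1)
            = δ ^ 2 * m + δ ^ 2 * (2 * Real.sqrt m + 1) := by ring
        have h4 : δ ^ 2 * m < ε ^ 2 := by rw [e2, e3]; linarith
        have h5 : (1 - lam) ^ 2 * m < δ ^ 2 * m :=
          mul_lt_mul_of_pos_right h3 hm_pos
        linarith
      exact (Real.sqrt_lt' hε).mpr h2
    · -- w is the normalized image of e₁
      have hLs : reflE d q hBqq_ne e1 = p := by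
        rw [reflE_apply, hBe1q, hBqq]
        have hc : 2 * (1 - a) / (2 - 2 * a) = 1 := by
          rw [div_eq_one_iff_eq (by intro h; linarith : (2 : ℝ) - 2 * a ≠ 0)]
          ring
        rw [hc, one_smul, hDq]
        exact sub_sub_cancel e1 p
      rw [hLs, hp0]
end
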